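/- In the X3C-to-Condorcet-CCAV construction, if W' is a subset of the unregistered voters whose addition makes p the Condorcet winner, then |W'| ≤ k, each b ∈ B is ranked above p by exactly one voter of W', and consequently the family {S_i : the voter for S_i is in W'} is an exact cover of B by three-sets. -/

import Mathlib

/-- Candidates for the X3C construction: `B = Fin (3k)` together with the
special candidates `c` and `p`. -/
abbrev XCand (k : ℕ) := Fin (3 * k) ⊕ Bool

/-- The distinguished candidate `p`. -/
def xp {k : ℕ} : XCand k := Sum.inr true

/-- The candidate `c`. -/
def xc {k : ℕ} : XCand k := Sum.inr false

/-- The candidate `b`. -/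
def xb {k : ℕ} (b : Fin (3 * k)) : XCand k := Sum.inl b

/-- A voter with preference list `l` (most preferred first) prefers `a` to `b`
when `a` occurs earlier in `l`.  The pairwise margin of `a` over `b` is the
number of voters preferring `a` to `b` minus the number preferring `b` to `a`. -/
def margin {C : Type*} [DecidableEq C] (votes : List (List C)) (a b : C) : ℤ :=
  ((votes.countP (fun l => decide (l.idxOf a < l.idxOf b))) : ℤ) -
    ((votes.countP (fun l => decide (l.idxOf b < l.idxOf a))) : ℤ)

/-- Registered vote `B > p > c`. -/
def reg1 (k : ℕ) : List (XCand k) := ((List.finRange (3 * k)).map xb) ++ [xp, xc]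

/-- Registered vote `p > c > B`. -/
def reg2 (k : ℕ) : List (XCand k) := [xp, xc] ++ ((List.finRange (3 * k)).map xb)

/-- Unregistered vote for `S_i`: `S_i > c > p > B \ S_i`. -/
noncomputable def unreg {k n : ℕ} (S : Fin n → Finset (Fin (3 * k))) (i : Fin n) :
    List (XCand k) :=
  ((S i).toList.map xb) ++ [xc, xp] ++
    ((((Finset.univ : Finset (Fin (3 * k))) \ S i).toList).map xb)

/-- The election after adding the unregistered voters indexed by `T`:
`k - 1` votes `B > p > c`, two votes `p > c > B`, and for each `i ∈ T` the vote
`S_i > c > p > B \ S_i`. -/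
noncomputable def xVotes {k n : ℕ} (S : Fin n → Finset (Fin (3 * k)))
    (T : Finset (Fin n)) : List (List (XCand k)) :=
  List.replicate (k - 1) (reg1 k) ++ List.replicate 2 (reg2 k) ++
    (T.toList.map (unreg S))

-- aux lemmas
@[reducible] instance (priority := 1100) xBEq (k : ℕ) : BEq (XCand k) := instBEqOfDecidableEq

-- generic indexOf lemmas for arbitrary lawful BEq
section idx
variable {α : Type*} [BEq α] [LawfulBEq α]

lemma idx_cons_self (a : α) (l : List α) : (a :: l).idxOf a = 0 := by
  rw [List.idxOf_cons, beq_self_eq_true]; rfl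

lemma idx_cons_ne {b a : α} (h : b ≠ a) (l : List α) :
    (b :: l).idxOf a = l.idxOf a + 1 := by
  rw [List.idxOf_cons, show (b == a) = false from beq_eq_false_iff_ne.2 h]; rfl

lemma idx_append_of_mem {a : α} {l₁ : List α} {l₂ : List α} (h : a ∈ l₁) :
    (l₁ ++ l₂).idxOf a = l₁.idxOf a := by
  induction l₁ with
  | nil => simp at h
  | cons b t ih =>
    by_cases hb : b = a
    · subst hb; rw [List.cons_append, idx_cons_self, idx_cons_self]
    · rw [List.cons_append, idx_cons_ne hb, idx_cons_ne hb,
        ih ((List.mem_cons.1 h).resolve_left fun e => hb e.symm)]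

lemma idx_append_of_not_mem {a : α} {l₁ : List α} {l₂ : List α} (h : a ∉ l₁) :
    (l₁ ++ l₂).idxOf a = l₁.length + l₂.idxOf a := by
  induction l₁ with
  | nil => simp
  | cons b t ih =>
    have hb : b ≠ a := fun e => h (e ▸ List.mem_cons_self)
    rw [List.cons_append, idx_cons_ne hb, ih (fun e => h (List.mem_cons_of_mem _ e)),
      List.length_cons]
    omega

lemma idx_lt_length {a : α} {l : List α} (h : a ∈ l) : l.idxOf a < l.length := by
  induction l with
  | nil => simp at h
  | cons b t ih =>
    by_cases hb : b = a
    · subst hb; rw [idx_cons_self]; simp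
    · rw [idx_cons_ne hb, List.length_cons]
      have := ih ((List.mem_cons.1 h).resolve_left fun e => hb e.symm)
      omega

end idx

lemma countP_replicate' {α} (p : α → Bool) (n : ℕ) (a : α) :
    (List.replicate n a).countP p = if p a then n else 0 := by
  induction n with
  | zero => simp
  | succ n ih => rw [List.replicate_succ, List.countP_cons, ih]; cases h : p a <;> simp [h]

lemma countP_toList' {α} [DecidableEq α] (T : Finset α) (p : α → Bool) :
    T.toList.countP p = (T.filter (fun i => p i)).card := by
  classical
  calc T.toList.countP p = Multiset.countP (fun b => p b = true) T.val := by
        rw [← Finset.coe_toList T, Multiset.coe_countP]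
        congr 1; funext b; cases p b <;> simp
    _ = (T.filter (fun i => p i)).card := by
        rw [Multiset.countP_eq_card_filter]; rfl

section votes
variable {k n : ℕ} (S : Fin n → Finset (Fin (3 * k))) (i : Fin n) (b : Fin (3 * k))

lemma xp_notmem_map (l : List (Fin (3 * k))) : xp ∉ l.map xb := by simp [xp, xb]
lemma xc_notmem_map (l : List (Fin (3 * k))) : xc ∉ l.map xb := by simp [xc, xb]

lemma reg1_indexOf_p : (reg1 k).idxOf xp = 3 * k := by
  rw [reg1, idx_append_of_not_mem (xp_notmem_map _), idx_cons_self]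
  simp

lemma reg1_indexOf_c : (reg1 k).idxOf xc = 3 * k + 1 := by
  rw [reg1, idx_append_of_not_mem (xc_notmem_map _),
    idx_cons_ne (by simp [xc, xp]), idx_cons_self]
  simp

lemma reg1_pc : (reg1 k).idxOf xp < (reg1 k).idxOf xc := by
  rw [reg1_indexOf_p, reg1_indexOf_c]; omega

lemma reg1_bp : (reg1 k).idxOf (xb b) < (reg1 k).idxOf xp := by
  rw [reg1_indexOf_p, reg1]
  rw [idx_append_of_mem (by simp [xb])]
  have := idx_lt_length (show xb b ∈ (List.finRange (3*k)).map xb by simp [xb])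
  simpa using this

lemma reg2_p (d : XCand k) (hd : d ≠ xp) : (reg2 k).idxOf xp < (reg2 k).idxOf d := by
  have h0 : (reg2 k).idxOf xp = 0 := by rw [reg2]; exact idx_cons_self _ _
  have h1 : (reg2 k).idxOf d =
      ((xc :: (List.finRange (3 * k)).map xb).idxOf d) + 1 := by
    rw [reg2,
      show (([xp, xc] : List (XCand k)) ++ (List.finRange (3 * k)).map xb)
        = xp :: xc :: (List.finRange (3 * k)).map xb from rfl]
    exact idx_cons_ne (Ne.symm hd) _
  omega

lemma unreg_indexOf_c : (unreg S i).idxOf xc = (S i).card := by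
  rw [unreg, idx_append_of_mem (by simp [xc, xp, xc_notmem_map]),
    idx_append_of_not_mem (xc_notmem_map _), idx_cons_self]
  simp

lemma unreg_indexOf_p : (unreg S i).idxOf xp = (S i).card + 1 := by
  rw [unreg, idx_append_of_mem (by simp [xc, xp, xp_notmem_map]),
    idx_append_of_not_mem (xp_notmem_map _),
    idx_cons_ne (by simp [xc, xp]), idx_cons_self]
  simp

lemma unreg_cp : (unreg S i).idxOf xc < (unreg S i).idxOf xp := by
  rw [unreg_indexOf_c, unreg_indexOf_p]; omega

lemma unreg_bp (hb : b ∈ S i) :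
    (unreg S i).idxOf (xb b) < (unreg S i).idxOf xp := by
  rw [unreg_indexOf_p, unreg]
  have hm : xb b ∈ (S i).toList.map xb := by simp [xb, hb]
  rw [idx_append_of_mem (List.mem_append_left _ hm), idx_append_of_mem hm]
  have := idx_lt_length hm
  simp only [List.length_map, Finset.length_toList] at this
  omega

lemma unreg_pb (hb : b ∉ S i) :
    (unreg S i).idxOf xp < (unreg S i).idxOf (xb b) := by
  rw [unreg_indexOf_p, unreg]
  have hm : xb b ∉ (S i).toList.map xb ++ [xc, xp] := by
    simp [xb, xc, xp, hb]
  rw [idx_append_of_not_mem hm]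
  simp only [List.length_append, List.length_map, Finset.length_toList,
    List.length_cons, List.length_nil]
  omega

end votes

section main
variable {k n : ℕ} (S : Fin n → Finset (Fin (3 * k))) (T : Finset (Fin n))

lemma margin_pc :
    margin (xVotes S T) xp xc = ((k - 1 : ℕ) : ℤ) + 2 - T.card := by
  rw [margin, xVotes]
  rw [List.countP_append, List.countP_append, List.countP_append, List.countP_append]
  rw [countP_replicate', countP_replicate', countP_replicate', countP_replicate']
  rw [List.countP_map, List.countP_map, countP_toList', countP_toList']
  have h1 : (decide ((reg1 k).idxOf (xp) < (reg1 k).idxOf xc)) = true :=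
    decide_eq_true reg1_pc
  have h2 : (decide ((reg2 k).idxOf (xp (k := k)) < (reg2 k).idxOf xc)) = true :=
    decide_eq_true (reg2_p xc (by simp [xc, xp]))
  have h3 : (decide ((reg1 k).idxOf (xc) < (reg1 k).idxOf (xp (k := k)))) = false := by
    have := reg1_pc (k := k); simp only [decide_eq_false_iff_not, not_lt]; omega
  have h4 : (decide ((reg2 k).idxOf (xc) < (reg2 k).idxOf (xp (k := k)))) = false := by
    have := reg2_p (k := k) xc (by simp [xc, xp])
    simp only [decide_eq_false_iff_not, not_lt]; omega
  rw [h1, h2, h3, h4]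
  have h5 : ∀ i : Fin n,
      ((fun l => decide (l.idxOf xp < l.idxOf xc)) ∘ unreg S) i = false := by
    intro i; have := unreg_cp S i; simp [Function.comp]; omega
  have h6 : ∀ i : Fin n,
      ((fun l => decide (l.idxOf xc < l.idxOf xp)) ∘ unreg S) i = true := by
    intro i; have := unreg_cp S i; simp [Function.comp, this]
  simp only [h5, h6]
  simp [Finset.filter_true_of_mem, Finset.filter_false_of_mem]

lemma margin_pb (b : Fin (3 * k)) :
    margin (xVotes S T) xp (xb b) =
      2 + ((T.filter (fun i => b ∉ S i)).card : ℤ)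
        - ((k - 1 : ℕ) : ℤ) - ((T.filter (fun i => b ∈ S i)).card : ℤ) := by
  rw [margin, xVotes]
  rw [List.countP_append, List.countP_append, List.countP_append, List.countP_append]
  rw [countP_replicate', countP_replicate', countP_replicate', countP_replicate']
  rw [List.countP_map, List.countP_map, countP_toList', countP_toList']
  have h1 : (decide ((reg1 k).idxOf (xp) < (reg1 k).idxOf (xb b))) = false := by
    have := reg1_bp (k := k) b; simp only [decide_eq_false_iff_not, not_lt]; omega
  have h2 : (decide ((reg2 k).idxOf (xp (k := k)) < (reg2 k).idxOf (xb b))) = true :=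
    decide_eq_true (reg2_p (xb b) (by simp [xb, xp]))
  have h3 : (decide ((reg1 k).idxOf (xb b) < (reg1 k).idxOf (xp (k := k)))) = true :=
    decide_eq_true (reg1_bp b)
  have h4 : (decide ((reg2 k).idxOf (xb b) < (reg2 k).idxOf (xp (k := k)))) = false := by
    have := reg2_p (k := k) (xb b) (by simp [xb, xp])
    simp only [decide_eq_false_iff_not, not_lt]; omega
  rw [h1, h2, h3, h4]
  have h5 : ∀ i : Fin n,
      ((fun l => decide (l.idxOf xp < l.idxOf (xb b))) ∘ unreg S) i
        = decide (b ∉ S i) := by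
    intro i
    by_cases hb : b ∈ S i
    · have := unreg_bp S i b hb; simp [Function.comp, hb]; omega
    · have := unreg_pb S i b hb; simp [Function.comp, hb, this]
  have h6 : ∀ i : Fin n,
      ((fun l => decide (l.idxOf (xb b) < l.idxOf xp)) ∘ unreg S) i
        = decide (b ∈ S i) := by
    intro i
    by_cases hb : b ∈ S i
    · have := unreg_bp S i b hb; simp [Function.comp, hb, this]
    · have := unreg_pb S i b hb; simp [Function.comp, hb]; omega
  simp only [h5, h6]
  simp
  ring

end main

/-- In the X3C-to-Condorcet-CCAV construction, if adding the unregistered voters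
indexed by `T` makes `p` the Condorcet winner, then `|T| ≤ k`, each `b ∈ B` is
ranked above `p` by exactly one added voter (i.e. lies in `S_i` for exactly one
`i ∈ T`), and consequently `{S_i : i ∈ T}` is an exact cover of `B` by
three-sets: `|T| = k`, the union is `B`, and the sets are pairwise disjoint. -/
theorem stmt15 {k n : ℕ} (hk : 3 ≤ k)
    (S : Fin n → Finset (Fin (3 * k))) (hS3 : ∀ i, (S i).card = 3)
    (T : Finset (Fin n))
    (hwin : ∀ d : XCand k, d ≠ xp → 0 < margin (xVotes S T) xp d) :
    T.card ≤ k ∧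
    (∀ b : Fin (3 * k), ∃! i : Fin n, i ∈ T ∧ b ∈ S i) ∧
    T.card = k ∧
    T.biUnion S = Finset.univ ∧
    (∀ i ∈ T, ∀ j ∈ T, i ≠ j → Disjoint (S i) (S j)) := by
  let m : Fin (3 * k) → ℕ := fun b => (T.filter (fun i => b ∈ S i)).card
  have hmdef : ∀ b, m b = (T.filter (fun i => b ∈ S i)).card := fun _ => rfl
  -- |T| ≤ k
  have hc := hwin xc (by simp [xc, xp])
  rw [margin_pc] at hc
  have hk1 : ((k - 1 : ℕ) : ℤ) = (k : ℤ) - 1 := by omega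
  have hTk : T.card ≤ k := by omega
  -- margin condition for b
  have hb' : ∀ b : Fin (3 * k), (T.card : ℤ) - 2 * m b ≥ (k : ℤ) - 2 := by
    intro b
    have h := hwin (xb b) (by simp [xb, xp])
    rw [margin_pb] at h
    have hcompl : (T.filter (fun i => b ∉ S i)).card = T.card - m b := by
      have h1 := Finset.card_filter_add_card_filter_not
        (s := T) (p := fun i => b ∈ S i)
      have h2 := hmdef b
      omega
    have hmle : m b ≤ T.card := Finset.card_filter_le _ _
    rw [hcompl] at h
    have h2 : ((T.card - m b : ℕ) : ℤ) = (T.card : ℤ) - m b := by omega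
    have h3 := hmdef b
    omega
  -- m b ≤ 1
  have hmle1 : ∀ b, m b ≤ 1 := by
    intro b
    have := hb' b
    by_contra hcon
    push_neg at hcon
    have : (2 : ℤ) ≤ m b := by exact_mod_cast hcon
    omega
  -- sum of m = 3 |T|
  have hsum : ∑ b : Fin (3 * k), m b = 3 * T.card := by
    have : ∀ b, m b = ∑ i ∈ T, if b ∈ S i then 1 else 0 := by
      intro b; rw [hmdef, Finset.card_filter]
    calc ∑ b : Fin (3 * k), m b
        = ∑ b : Fin (3 * k), ∑ i ∈ T, if b ∈ S i then 1 else 0 := by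
          exact Finset.sum_congr rfl (fun b _ => this b)
      _ = ∑ i ∈ T, ∑ b : Fin (3 * k), if b ∈ S i then 1 else 0 := Finset.sum_comm
      _ = ∑ i ∈ T, (S i).card := by
          refine Finset.sum_congr rfl fun i _ => ?_
          rw [← Finset.card_filter]
          congr 1
          exact Finset.filter_univ_mem _
      _ = ∑ i ∈ T, 3 := by simp [hS3]
      _ = 3 * T.card := by rw [Finset.sum_const]; ring
  -- T nonempty
  have hTne : T.Nonempty := by
    by_contra hcon
    rw [Finset.not_nonempty_iff_eq_empty] at hcon
    have hb0 := hb' ⟨0, by positivity⟩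
    have hz : m ⟨0, by positivity⟩ = 0 := by rw [hmdef, hcon]; simp
    rw [hcon, hz] at hb0
    simp at hb0
    omega
  -- some b with m b ≥ 1, so |T| = k
  obtain ⟨i0, hi0⟩ := hTne
  have hS0 : (S i0).Nonempty := Finset.card_pos.1 (by rw [hS3]; omega)
  obtain ⟨b0, hb0⟩ := hS0
  have hm0 : 1 ≤ m b0 := by
    rw [hmdef]
    exact Finset.card_pos.2 ⟨i0, Finset.mem_filter.2 ⟨hi0, hb0⟩⟩
  have hmb0 : m b0 = 1 := le_antisymm (hmle1 b0) hm0
  have hTcard : T.card = k := by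
    have := hb' b0
    rw [hmb0] at this
    omega
  -- all m b = 1
  have hall : ∀ b, m b = 1 := by
    intro b
    by_contra hcon
    have hb0' : m b = 0 := by have := hmle1 b; omega
    have : ∑ b : Fin (3 * k), m b = m b + ∑ x ∈ Finset.univ.erase b, m x :=
      (Finset.add_sum_erase _ _ (Finset.mem_univ b)).symm
    have hle : ∑ x ∈ Finset.univ.erase b, m x ≤ (Finset.univ.erase b).card := by
      calc ∑ x ∈ Finset.univ.erase b, m x ≤ ∑ _x ∈ Finset.univ.erase b, 1 :=
            Finset.sum_le_sum fun x _ => hmle1 x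
        _ = (Finset.univ.erase b).card := by simp
    have hcard : (Finset.univ.erase b).card = 3 * k - 1 := by
      rw [Finset.card_erase_of_mem (Finset.mem_univ b)]
      simp
    rw [hsum, hTcard] at this
    omega
  -- unique existence
  have huniq : ∀ b : Fin (3 * k), ∃! i : Fin n, i ∈ T ∧ b ∈ S i := by
    intro b
    have h1 := hall b
    rw [hmdef] at h1
    obtain ⟨i, hi⟩ := Finset.card_eq_one.1 h1
    refine ⟨i, ?_, ?_⟩
    · have : i ∈ T.filter (fun j => b ∈ S j) := hi ▸ Finset.mem_singleton_self i
      exact Finset.mem_filter.1 this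
    · intro j hj
      have : j ∈ T.filter (fun j => b ∈ S j) := Finset.mem_filter.2 hj
      rw [hi] at this
      exact Finset.mem_singleton.1 this
  refine ⟨hTk, huniq, hTcard, ?_, ?_⟩
  · ext b
    simp only [Finset.mem_biUnion, Finset.mem_univ, iff_true]
    obtain ⟨i, hi, _⟩ := huniq b
    exact ⟨i, hi.1, hi.2⟩
  · intro i hi j hj hij
    rw [Finset.disjoint_left]
    intro b hbi hbj
    obtain ⟨w, _, hu⟩ := huniq b
    exact hij ((hu i ⟨hi, hbi⟩).trans (hu j ⟨hj, hbj⟩).symm)
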